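/- Let d ≥ 4 and f ∈ Rat_d^s ∩ I(d). Then f has at least 3 distinct holes. -/

import Mathlib

open MvPolynomial Filter Topology
open scoped Classical

noncomputable section

/-- Binary forms: polynomials in `X 0, X 1` over `ℂ`. A pair of homogeneous elements of
degree `d`, not both zero, represents a point of `ℙ^{2d+1}`. -/
abbrev MP : Type := MvPolynomial (Fin 2) ℂ

noncomputable instance : NormalizationMonoid MP :=
  (UniqueFactorizationMonoid.strongNormalizationMonoid : StrongNormalizationMonoid MP).toNormalizationMonoid

noncomputable instance : NormalizedGCDMonoid MP :=
  UniqueFactorizationMonoid.toNormalizedGCDMonoid MP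

/-- The complex projective line `ℙ¹(ℂ)`. -/
abbrev P1 : Type := Projectivization ℂ (Fin 2 → ℂ)

/-- A linear form vanishing exactly at the projective point `z`. -/
noncomputable def linForm (z : P1) : MP :=
  C (z.rep 1) * X 0 - C (z.rep 0) * X 1

/-- Multiplicity of `z` as a zero of the binary form `H`. -/
noncomputable def rootMult (H : MP) (z : P1) : ℕ :=
  sSup {k : ℕ | linForm z ^ k ∣ H}

/-- `H_f = gcd(P, Q)` for `f = [P : Q]`. -/
noncomputable def Hgcd (f : MP × MP) : MP := gcd f.1 f.2

/-- The depth `d_z(f)` of `z` as a hole of `f`: multiplicity of `z` as a zero of `H_f`. -/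
noncomputable def depthP (f : MP × MP) (z : P1) : ℕ := rootMult (Hgcd f) z

/-- `z` is a hole of `f`, i.e. a zero of `H_f`. -/
def IsHole (f : MP × MP) (z : P1) : Prop := linForm z ∣ Hgcd f

/-- The induced map `f̂ = [P / H_f : Q / H_f]` as a pair of binary forms. -/
noncomputable def fhat (f : MP × MP) : MP × MP :=
  ((dvd_def.mp (gcd_dvd_left f.1 f.2)).choose,
   (dvd_def.mp (gcd_dvd_right f.1 f.2)).choose)

/-- A pair of binary forms acting as a self-map of `ℙ¹` (junk value `z` where undefined). -/
noncomputable def apply₁ (g : MP × MP) (z : P1) : P1 :=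
  if h : (![eval z.rep g.1, eval z.rep g.2] : Fin 2 → ℂ) ≠ 0 then
    Projectivization.mk ℂ _ h
  else z

/-- The induced map `f̂` as a self-map of `ℙ¹`. -/
noncomputable def fhatFun (f : MP × MP) : P1 → P1 := apply₁ (fhat f)

/-- The induced map of `f` is constant. -/
def ConstHat (f : MP × MP) : Prop := ∃ c : P1, ∀ z : P1, fhatFun f z = c

/-- Local multiplicity `m_z(g)` of the rational map `[g.1 : g.2]` at `z`
(equal to `0` when the map is constant). -/
noncomputable def multAt (g : MP × MP) (z : P1) : ℕ :=
  rootMult (C (eval z.rep g.2) * g.1 - C (eval z.rep g.1) * g.2) z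

/-- Local multiplicity `m_z(f̂)` of the induced map of `f` at `z`. -/
noncomputable def hatMult (f : MP × MP) (z : P1) : ℕ := multAt (fhat f) z

/-- Composition of pairs of binary forms (homogeneous representatives). -/
noncomputable def comp2 (f g : MP × MP) : MP × MP :=
  (aeval ![g.1, g.2] f.1, aeval ![g.1, g.2] f.2)

/-- The iterate `f^n` as a pair of binary forms (canonical homogeneous representative). -/
noncomputable def iterPair (f : MP × MP) : ℕ → MP × MP
  | 0 => (X 0, X 1)
  | n + 1 => comp2 f (iterPair f n)

/-- GIT semistability of a degree-`d` point `f` of `ℙ^{2d+1}`. -/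
def Semistable (d : ℕ) (f : MP × MP) : Prop :=
  (∀ z : P1, (depthP f z : ℚ) ≤ ((d : ℚ) + 1) / 2) ∧
  ∀ h : P1, (d : ℚ) / 2 ≤ (depthP f h : ℚ) → fhatFun f h ≠ h

/-- GIT stability of a degree-`d` point `f` of `ℙ^{2d+1}`. -/
def Stable (d : ℕ) (f : MP × MP) : Prop :=
  (∀ z : P1, (depthP f z : ℚ) ≤ (d : ℚ) / 2) ∧
  ∀ h : P1, ((d : ℚ) - 1) / 2 ≤ (depthP f h : ℚ) → fhatFun f h ≠ h

/-- The indeterminacy locus `I(d)`: the induced map is a constant `c` which is a hole. -/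
def Idet (f : MP × MP) : Prop :=
  ∃ c : P1, (∀ z : P1, fhatFun f z = c) ∧ IsHole f c

/-- The set `U_n` of `n`-unstable maps. -/
def Unstable (d n : ℕ) (f : MP × MP) : Prop :=
  Semistable d f ∧ ¬ Idet f ∧ ¬ Semistable (d ^ n) (iterPair f n)

/-- `f` is a representative of a point of `ℙ^{2d+1}`: a pair of homogeneous binary
forms of degree `d`, not both zero. -/
def IsRatRep (d : ℕ) (f : MP × MP) : Prop :=
  f.1.IsHomogeneous d ∧ f.2.IsHomogeneous d ∧ f ≠ 0

/-- Projective equality of pairs of binary forms. -/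
def ProjEq (f g : MP × MP) : Prop := ∃ c : ℂ, c ≠ 0 ∧ g = (C c * f.1, C c * f.2)

/-- The point `∞ = [1 : 0]` of `ℙ¹`. -/
noncomputable def infty : P1 :=
  Projectivization.mk ℂ ![1, 0] (by
    intro h
    simpa using congrFun h 0)

/-- The point `[a : 1]` of `ℙ¹`. -/
noncomputable def ptc (a : ℂ) : P1 :=
  Projectivization.mk ℂ ![a, 1] (by
    intro h
    simpa using congrFun h 1)

/-- The degree of a pair of binary forms. -/
def pairDeg (g : MP × MP) : ℕ := max g.1.totalDegree g.2.totalDegree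

end


/-! ### Auxiliary lemmas -/

noncomputable section Aux

/-- The map sending a binary form to a univariate polynomial over `MP`, separating
homogeneous components by degree. -/
noncomputable def Emap : MP →ₐ[ℂ] Polynomial MP :=
  aeval (fun i => Polynomial.C (X i) * Polynomial.X)

lemma Emap_monomial (d : Fin 2 →₀ ℕ) (c : ℂ) :
    Emap (monomial d c) = Polynomial.C (monomial d c) * Polynomial.X ^ (d.degree) := by
  rw [Emap, aeval_monomial]
  have : (d.prod fun i k => (Polynomial.C (X i : MP) * Polynomial.X) ^ k)
      = Polynomial.C (d.prod fun i k => (X i : MP) ^ k) * Polynomial.X ^ d.degree := by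
    rw [Finsupp.prod, Finsupp.prod]
    simp_rw [mul_pow, Finset.prod_mul_distrib, ← map_pow, ← map_prod,
      Finset.prod_pow_eq_pow_sum]
    rw [Finsupp.degree]; rfl
  rw [this, monomial_eq, map_mul]
  have : (algebraMap ℂ (Polynomial MP)) c = Polynomial.C (C c) := rfl
  rw [this]; ring

lemma Emap_coeff_coeff (p : MP) (k : ℕ) (d : Fin 2 →₀ ℕ) :
    ((Emap p).coeff k).coeff d = if d.degree = k then p.coeff d else 0 := by
  induction p using MvPolynomial.induction_on' with
  | monomial e c =>
    rw [Emap_monomial, Polynomial.coeff_C_mul, Polynomial.coeff_X_pow]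
    by_cases hde : e = d
    · subst hde
      by_cases h : e.degree = k
      · simp [h, mul_ite]
      · rw [if_neg h, mul_ite, mul_one, mul_zero, if_neg (fun hh => h hh.symm)]
        simp
    · by_cases h : k = e.degree <;> simp [h, hde, coeff_monomial]
  | add p q hp hq =>
    simp only [map_add, Polynomial.coeff_add, MvPolynomial.coeff_add, hp, hq]
    split <;> simp

lemma isHomogeneous_of_coeff (p : MP) (k : ℕ) (h : ∀ d, coeff d p ≠ 0 → d.degree = k) :
    p.IsHomogeneous k := by
  intro d hd
  have := h d hd
  simp only [Finsupp.weight_apply, Pi.one_apply, smul_eq_mul, mul_one]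
  simpa [Finsupp.degree_apply, Finsupp.sum] using this

lemma coeff_of_isHomogeneous {p : MP} {k : ℕ} (h : p.IsHomogeneous k) :
    ∀ d, coeff d p ≠ 0 → d.degree = k := fun d hd => by
  by_contra hne
  exact hd (h.coeff_eq_zero hne)

lemma Emap_ne_zero {p : MP} (hp : p ≠ 0) : Emap p ≠ 0 := by
  obtain ⟨d, hd⟩ := MvPolynomial.ne_zero_iff.mp hp
  intro h
  have := Emap_coeff_coeff p d.degree d
  rw [h] at this
  simp only [Polynomial.coeff_zero, MvPolynomial.coeff_zero, if_pos rfl] at this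
  exact hd this.symm

lemma Emap_of_isHomogeneous {p : MP} {n : ℕ} (h : p.IsHomogeneous n) :
    Emap p = Polynomial.C p * Polynomial.X ^ n := by
  ext k d
  rw [Emap_coeff_coeff, Polynomial.coeff_C_mul, Polynomial.coeff_X_pow, mul_ite, mul_one,
    mul_zero]
  by_cases hd : coeff d p = 0
  · split <;> split <;> simp [hd]
  · have hdeg := coeff_of_isHomogeneous h d hd
    subst hdeg
    split <;> split <;> first | rfl | omega

/-- In `MP`, factors of nonzero homogeneous polynomials are homogeneous. -/
lemma isHomogeneous_of_factor {a b : MP} {n : ℕ} (ha : a ≠ 0) (hb : b ≠ 0)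
    (h : (a * b).IsHomogeneous n) :
    ∃ k l : ℕ, k + l = n ∧ a.IsHomogeneous k ∧ b.IsHomogeneous l := by
  have hab : a * b ≠ 0 := mul_ne_zero ha hb
  have hEa := Emap_ne_zero ha
  have hEb := Emap_ne_zero hb
  have hmul : Emap a * Emap b = Polynomial.C (a * b) * Polynomial.X ^ n := by
    rw [← map_mul, Emap_of_isHomogeneous h]
  have hdeg : (Emap a).natDegree + (Emap b).natDegree = n := by
    rw [← Polynomial.natDegree_mul hEa hEb, hmul, Polynomial.natDegree_C_mul_X_pow _ _ hab]
  have htr : (Emap a).natTrailingDegree + (Emap b).natTrailingDegree = n := by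
    rw [← Polynomial.natTrailingDegree_mul hEa hEb, hmul,
      Polynomial.C_mul_X_pow_eq_monomial, Polynomial.natTrailingDegree_monomial hab]
  have hta : (Emap a).natTrailingDegree = (Emap a).natDegree := by
    have h1 := (Emap a).natTrailingDegree_le_natDegree
    have h2 := (Emap b).natTrailingDegree_le_natDegree
    omega
  have htb : (Emap b).natTrailingDegree = (Emap b).natDegree := by
    have h1 := (Emap a).natTrailingDegree_le_natDegree
    have h2 := (Emap b).natTrailingDegree_le_natDegree
    omega
  have key : ∀ c : MP, c ≠ 0 → (Emap c).natTrailingDegree = (Emap c).natDegree →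
      c.IsHomogeneous (Emap c).natDegree := by
    intro c hc hco
    apply isHomogeneous_of_coeff
    intro d hd
    by_contra hne
    have h0 : ((Emap c).coeff d.degree).coeff d = coeff d c := by
      rw [Emap_coeff_coeff, if_pos rfl]
    rcases lt_or_gt_of_ne hne with hlt | hgt
    · rw [Polynomial.coeff_eq_zero_of_lt_natTrailingDegree (by omega)] at h0
      exact hd (by simpa using h0.symm)
    · rw [Polynomial.coeff_eq_zero_of_natDegree_lt (by omega)] at h0
      exact hd (by simpa using h0.symm)
  exact ⟨(Emap a).natDegree, (Emap b).natDegree, hdeg, key a ha hta, key b hb htb⟩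

lemma aeval_smulQ {S : Type} [CommSemiring S] [Algebra ℂ S] {p : MP} {n : ℕ}
    (hp : p.IsHomogeneous n) (t : S) (g : Fin 2 → S) :
    aeval (fun i => t * g i) p = t ^ n * aeval g p := by
  conv_lhs => rw [p.as_sum]
  conv_rhs => rw [p.as_sum]
  rw [map_sum, map_sum, Finset.mul_sum]
  apply Finset.sum_congr rfl
  intro d hd
  rw [aeval_monomial, aeval_monomial]
  have hdeg : d.degree = n :=
    coeff_of_isHomogeneous hp d (mem_support_iff.mp hd)
  have : (d.prod fun i k => (t * g i) ^ k) = t ^ n * d.prod fun i k => g i ^ k := by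
    rw [Finsupp.prod, Finsupp.prod]
    simp_rw [mul_pow, Finset.prod_mul_distrib, Finset.prod_pow_eq_pow_sum]
    rw [← hdeg, Finsupp.degree]; rfl
  rw [this]; ring

lemma eval_smulQ {p : MP} {n : ℕ} (hp : p.IsHomogeneous n) (t : ℂ) (g : Fin 2 → ℂ) :
    eval (fun i => t * g i) p = t ^ n * eval g p := by
  have h := aeval_smulQ (S := ℂ) hp t g
  rw [aeval_def, aeval_def, Algebra.algebraMap_self] at h
  rw [MvPolynomial.eval, MvPolynomial.eval, coe_eval₂Hom, coe_eval₂Hom]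
  exact h

lemma comp1Q (r : ℂ) (p : MP) :
    Polynomial.eval r (aeval ![Polynomial.X, 1] p) = eval ![r, 1] p := by
  induction p using MvPolynomial.induction_on with
  | C a => simp
  | add p q hp hq => simp [hp, hq]
  | mul_X p i hp => fin_cases i <;> simp [hp]

lemma comp2Q (r : ℂ) (p : MP) :
    Polynomial.eval r (aeval ![1, Polynomial.X] p) = eval ![1, r] p := by
  induction p using MvPolynomial.induction_on with
  | C a => simp
  | add p q hp hq => simp [hp, hq]
  | mul_X p i hp => fin_cases i <;> simp [hp]

/-- Every nonconstant binary form over `ℂ` has a nontrivial zero. -/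
lemma exists_root_binary {H : MP} {n : ℕ} (hH : H.IsHomogeneous n) (hn : 1 ≤ n) :
    ∃ v : Fin 2 → ℂ, v ≠ 0 ∧ eval v H = 0 := by
  by_contra hcon
  push_neg at hcon
  have hne : ∀ v : Fin 2 → ℂ, v ≠ 0 → eval v H ≠ 0 := fun v hv => hcon v hv
  have hp : ∀ r : ℂ, (aeval ![Polynomial.X, 1] H).eval r ≠ 0 := by
    intro r
    rw [comp1Q]
    apply hne
    intro h0
    simpa using congrFun h0 1
  have hq : ∀ r : ℂ, (aeval ![1, Polynomial.X] H).eval r ≠ 0 := by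
    intro r
    rw [comp2Q]
    apply hne
    intro h0
    simpa using congrFun h0 0
  have hconst : ∀ g : Polynomial ℂ, (∀ r, g.eval r ≠ 0) → g.natDegree = 0 := by
    intro g hg
    by_contra hdeg
    obtain ⟨z, hz⟩ := Complex.exists_root (Polynomial.natDegree_pos_iff_degree_pos.mp
      (Nat.pos_of_ne_zero hdeg))
    exact hg z hz
  have e1 : ∀ x y : ℂ, y ≠ 0 → eval ![x, y] H = y ^ n * eval ![x / y, 1] H := by
    intro x y hy
    have h := eval_smulQ hH y ![x / y, 1]
    have hfun : (![x, y] : Fin 2 → ℂ) = fun i => y * ![x / y, 1] i := by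
      funext i
      fin_cases i
      · show x = y * (x / y); field_simp
      · show y = y * 1; ring
    rw [hfun, h]
  have e2 : ∀ x y : ℂ, x ≠ 0 → eval ![x, y] H = x ^ n * eval ![1, y / x] H := by
    intro x y hx
    have h := eval_smulQ hH x ![1, y / x]
    have hfun : (![x, y] : Fin 2 → ℂ) = fun i => x * ![1, y / x] i := by
      funext i
      fin_cases i
      · show x = x * 1; ring
      · show y = x * (y / x); field_simp
    rw [hfun, h]
  obtain ⟨u, hu⟩ := Polynomial.natDegree_eq_zero.mp (hconst _ hp)
  obtain ⟨u', hu'⟩ := Polynomial.natDegree_eq_zero.mp (hconst _ hq)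
  have hpu : ∀ r : ℂ, eval ![r, 1] H = u := fun r => by
    rw [← comp1Q, ← hu, Polynomial.eval_C]
  have hqu : ∀ r : ℂ, eval ![1, r] H = u' := fun r => by
    rw [← comp2Q, ← hu', Polynomial.eval_C]
  have h11 : eval ![(1:ℂ), 1] H = u := hpu 1
  have h11' : eval ![(1:ℂ), 1] H = u' := hqu 1
  have h21 : eval ![(2:ℂ), 1] H = u := hpu 2
  have h21' : eval ![(2:ℂ), 1] H = 2 ^ n * u' := by
    rw [e2 2 1 two_ne_zero]
    rw [hqu]
  have hu0 : u ≠ 0 := by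
    rw [← h11]
    apply hne
    intro h0
    simpa using congrFun h0 0
  have hc : (2:ℂ) ^ n = 1 := by
    have huu : u' = u := by rw [← h11', h11]
    rw [h21, huu] at h21'
    have h2 : ((2:ℂ) ^ n - 1) * u = 0 := by ring_nf; linear_combination -h21'
    rcases mul_eq_zero.mp h2 with h | h
    · linear_combination h
    · exact absurd h hu0
  have hr : (2:ℝ) ^ n = 1 := by exact_mod_cast hc
  have : (1:ℝ) < 2 ^ n := one_lt_pow₀ (by norm_num) (by omega)
  linarith

lemma isUnit_C_of_ne_zero {c : ℂ} (hc : c ≠ 0) : IsUnit (C c : MP) :=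
  IsUnit.of_mul_eq_one (C c⁻¹) (by rw [← C_mul, mul_inv_cancel₀ hc, C_1])

lemma psiX0 : MvPolynomial.finSuccEquiv ℂ 1 (X 0) = Polynomial.X := finSuccEquiv_X_zero

lemma psiX1 : MvPolynomial.finSuccEquiv ℂ 1 (X 1) = Polynomial.C (X 0) := by
  rw [show (X 1 : MP) = X (Fin.succ 0) from rfl, finSuccEquiv_X_succ]

lemma psiC (a : ℂ) : MvPolynomial.finSuccEquiv ℂ 1 (C a) = Polynomial.C (C a) := by
  simp [finSuccEquiv_apply]

lemma aeval_CC (r s : ℂ) (p : MP) :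
    aeval ![(C r : MvPolynomial (Fin 1) ℂ), C s] p = C (eval ![r, s] p) := by
  induction p using MvPolynomial.induction_on with
  | C a => simp
  | add p q hp hq => simp only [map_add, hp, hq]
  | mul_X p i hp =>
    simp only [map_mul, hp, aeval_X, eval_X, C_mul]
    fin_cases i <;> simp

lemma psi_eval (a : MvPolynomial (Fin 1) ℂ) (p : MP) :
    Polynomial.eval a (MvPolynomial.finSuccEquiv ℂ 1 p) = aeval ![a, X 0] p := by
  induction p using MvPolynomial.induction_on with
  | C b => simp [psiC]
  | add p q hp hq => simp [hp, hq]
  | mul_X p i hp => fin_cases i <;> simp [hp, psiX0, psiX1]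

/-- Factor theorem: a root with nonzero second coordinate gives a linear factor. -/
lemma factor_of_root1 {H : MP} {n : ℕ} (hH : H.IsHomogeneous n) (v : Fin 2 → ℂ)
    (hv1 : v 1 ≠ 0) (hroot : eval v H = 0) :
    (C (v 1) * X 0 - C (v 0) * X 1 : MP) ∣ H := by
  obtain ⟨r, hr⟩ : ∃ r : ℂ, r = v 0 / v 1 := ⟨_, rfl⟩
  have hfactor : (C (v 1) * X 0 - C (v 0) * X 1 : MP) = C (v 1) * (X 0 - C r * X 1) := by
    rw [hr, mul_sub, ← mul_assoc, ← C_mul, mul_div_cancel₀ _ hv1]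
  rw [hfactor, (isUnit_C_of_ne_zero hv1).mul_left_dvd]
  have hroot1 : eval ![r, 1] H = 0 := by
    have h := eval_smulQ hH (v 1) ![r, 1]
    have hfun : v = fun i => v 1 * ![r, 1] i := by
      funext i
      fin_cases i <;> simp [hr]
      field_simp
    rw [← hfun, hroot] at h
    rcases mul_eq_zero.mp h.symm with h' | h'
    · exact absurd h' (pow_ne_zero _ hv1)
    · exact h'
  have hlin : MvPolynomial.finSuccEquiv ℂ 1 ((X 0 - C r * X 1 : MP))
      = Polynomial.X - Polynomial.C (C r * X 0) := by
    rw [map_sub, map_mul, psiX0, psiX1, psiC, ← Polynomial.C_mul]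
  have haev : aeval ![(C r * X 0 : MvPolynomial (Fin 1) ℂ), X 0] H = 0 := by
    have h := aeval_smulQ (S := MvPolynomial (Fin 1) ℂ) hH (X 0) ![C r, 1]
    have hfun : (![C r * X 0, X 0] : Fin 2 → MvPolynomial (Fin 1) ℂ)
        = fun i => X 0 * ![C r, 1] i := by
      funext i
      fin_cases i <;> simp [mul_comm]
    rw [hfun, h, show ((1 : MvPolynomial (Fin 1) ℂ)) = C 1 from C_1.symm, aeval_CC]
    rw [show (![r, (1:ℂ)] : Fin 2 → ℂ) = ![r, 1] from rfl, hroot1, map_zero, mul_zero]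
  have hdvd : Polynomial.X - Polynomial.C (C r * X 0) ∣ MvPolynomial.finSuccEquiv ℂ 1 H := by
    rw [Polynomial.dvd_iff_isRoot, Polynomial.IsRoot, psi_eval, haev]
  rw [← hlin] at hdvd
  have h2 := map_dvd (MvPolynomial.finSuccEquiv ℂ 1).symm hdvd
  simpa using h2

lemma factor_of_root {H : MP} {n : ℕ} (hH : H.IsHomogeneous n) (v : Fin 2 → ℂ)
    (hv : v ≠ 0) (hroot : eval v H = 0) :
    (C (v 1) * X 0 - C (v 0) * X 1 : MP) ∣ H := by
  by_cases hv1 : v 1 ≠ 0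
  · exact factor_of_root1 hH v hv1 hroot
  push_neg at hv1
  have hv0 : v 0 ≠ 0 := by
    intro h0
    apply hv
    funext i
    fin_cases i <;> simp [h0, hv1]
  obtain ⟨σ, hσ⟩ : ∃ σ : Equiv.Perm (Fin 2), σ = Equiv.swap 0 1 := ⟨_, rfl⟩
  have hσσ : ∀ i, σ (σ i) = i := by intro i; rw [hσ]; simp
  have hσ0 : σ 0 = 1 := by rw [hσ]; simp
  have hσ1 : σ 1 = 0 := by rw [hσ]; simp
  have hH' : (rename σ H).IsHomogeneous n := hH.rename_isHomogeneous
  have hroot' : eval (v ∘ σ) (rename σ H) = 0 := by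
    rw [eval_rename]
    have : (v ∘ σ) ∘ σ = v := by funext i; simp [hσσ]
    rw [this, hroot]
  have h1 : (C ((v ∘ σ) 1) * X 0 - C ((v ∘ σ) 0) * X 1 : MP) ∣ rename σ H :=
    factor_of_root1 hH' (v ∘ σ) (by simpa [hσ1] using hv0) hroot'
  have h2 := map_dvd (rename (R := ℂ) σ) h1
  have hren : rename σ (rename σ H) = H := by
    rw [rename_rename]
    have : (σ : Fin 2 → Fin 2) ∘ σ = id := funext hσσ
    rw [this, rename_id, AlgHom.id_apply]
  rw [hren] at h2
  have hlhs : rename σ (C ((v ∘ σ) 1) * X 0 - C ((v ∘ σ) 0) * X 1 : MP)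
      = -(C (v 1) * X 0 - C (v 0) * X 1 : MP) := by
    rw [map_sub, map_mul, map_mul, rename_C, rename_C, rename_X, rename_X, hσ0, hσ1]
    simp only [Function.comp_apply, hσ0, hσ1]
    ring
  rw [hlhs, neg_dvd] at h2
  exact h2

lemma linForm_dvd_of_root {H : MP} {n : ℕ} (hH : H.IsHomogeneous n) {v : Fin 2 → ℂ}
    (hv : v ≠ 0) (hroot : eval v H = 0) :
    linForm (Projectivization.mk ℂ v hv) ∣ H := by
  obtain ⟨z, hz⟩ : ∃ z : P1, z = Projectivization.mk ℂ v hv := ⟨_, rfl⟩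
  obtain ⟨a, ha⟩ := (Projectivization.mk_eq_mk_iff ℂ _ _ (Projectivization.rep_nonzero z)
    hv).mp (hz ▸ Projectivization.mk_rep z)
  have harep : ∀ i, z.rep i = (a : ℂ) * v i := by
    intro i
    rw [← ha]
    simp [Units.smul_def]
  have hlin : linForm z = C (a : ℂ) * (C (v 1) * X 0 - C (v 0) * X 1) := by
    rw [linForm, harep 0, harep 1, C_mul, C_mul]
    ring
  rw [← hz, hlin, (isUnit_C_of_ne_zero (Units.ne_zero a)).mul_left_dvd]
  exact factor_of_root hH v hv hroot

lemma homog0_eq_C {p : MP} (hp : p.IsHomogeneous 0) : p = C (coeff 0 p) := by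
  ext d
  rw [coeff_C]
  by_cases hd : d = 0
  · subst hd; simp
  · rw [if_neg (fun h => hd h.symm)]
    apply hp.coeff_eq_zero
    rw [Ne, Finsupp.degree_eq_zero_iff]
    exact hd

lemma homog_deg_zero_of_isUnit {p : MP} {e : ℕ} (hu : IsUnit p) (hp : p.IsHomogeneous e) :
    e = 0 := by
  obtain ⟨u, rfl⟩ := hu
  have h1 : ((u : MP) * (u⁻¹ : MPˣ)).IsHomogeneous 0 := by
    rw [u.mul_inv]; exact isHomogeneous_one _ _
  have hu0 : (u : MP) ≠ 0 := u.ne_zero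
  have hi0 : ((u⁻¹ : MPˣ) : MP) ≠ 0 := Units.ne_zero _
  obtain ⟨k, l, hkl, hk, _⟩ := isHomogeneous_of_factor hu0 hi0 h1
  have : e = k := hp.inj_right hk hu0
  omega

lemma linForm_isHomogeneous (z : P1) : (linForm z).IsHomogeneous 1 :=
  ((isHomogeneous_C_mul_X (z.rep 1) 0).sub (isHomogeneous_C_mul_X (z.rep 0) 1))

lemma linForm_ne_zero (z : P1) : linForm z ≠ 0 := by
  intro h
  have hrep := Projectivization.rep_nonzero z
  apply hrep
  have h0 : eval ![(1:ℂ), 0] (linForm z) = z.rep 1 := by simp [linForm]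
  have h1 : eval ![(0:ℂ), 1] (linForm z) = -z.rep 0 := by simp [linForm]
  rw [h] at h0 h1
  simp only [map_zero] at h0 h1
  funext i
  fin_cases i
  · show z.rep 0 = 0
    simpa [neg_eq_zero] using h1.symm
  · show z.rep 1 = 0
    exact h0.symm

lemma linForm_not_unit (z : P1) : ¬ IsUnit (linForm z) := fun hu =>
  one_ne_zero (homog_deg_zero_of_isUnit hu (linForm_isHomogeneous z))

lemma prime_assoc_linForm {H : MP} {d : ℕ} (hH : H.IsHomogeneous d) (hH0 : H ≠ 0)
    {q : MP} (hq : Prime q) (hdvd : q ∣ H) :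
    ∃ z : P1, linForm z ∣ H ∧ Associated q (linForm z) := by
  obtain ⟨s, hs⟩ := hdvd
  have hq0 : q ≠ 0 := hq.ne_zero
  have hs0 : s ≠ 0 := fun h => hH0 (by rw [hs, h, mul_zero])
  obtain ⟨k, l, hkl, hk, _⟩ := isHomogeneous_of_factor hq0 hs0 (hs ▸ hH)
  have hk1 : 1 ≤ k := by
    rcases Nat.eq_zero_or_pos k with h0 | h1
    · exfalso
      apply hq.not_unit
      have h2 := homog0_eq_C (h0 ▸ hk)
      rw [h2]
      apply isUnit_C_of_ne_zero
      intro hc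
      exact hq0 (by rw [h2, hc, C_0])
    · exact h1
  obtain ⟨v, hv, hroot⟩ := exists_root_binary hk hk1
  have hlin := linForm_dvd_of_root hk hv hroot
  obtain ⟨t, ht⟩ := hlin
  rcases (hq.irreducible.isUnit_or_isUnit ht) with hu | hu
  · exact absurd hu (linForm_not_unit _)
  · refine ⟨_, dvd_trans ⟨t, ht⟩ ⟨s, hs⟩, ?_⟩
    rw [ht]
    exact (associated_mul_unit_left _ _ hu)

lemma multiset_two_classes (L1 L2 : MP) (s : Multiset MP)
    (h : ∀ q ∈ s, Associated q L1 ∨ Associated q L2) :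
    ∃ a b : ℕ, a + b = Multiset.card s ∧ Associated s.prod (L1 ^ a * L2 ^ b) := by
  induction s using Multiset.induction_on with
  | empty => exact ⟨0, 0, rfl, by simp⟩
  | cons q s ih =>
    obtain ⟨a, b, hab, hassoc⟩ := ih (fun x hx => h x (Multiset.mem_cons_of_mem hx))
    rcases h q (Multiset.mem_cons_self q s) with hq | hq
    · refine ⟨a + 1, b, by simp [Multiset.card_cons]; omega, ?_⟩
      rw [Multiset.prod_cons]
      have h2 := hq.mul_mul hassoc
      rwa [show L1 * (L1 ^ a * L2 ^ b) = L1 ^ (a + 1) * L2 ^ b by ring] at h2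
    · refine ⟨a, b + 1, by simp [Multiset.card_cons]; omega, ?_⟩
      rw [Multiset.prod_cons]
      have h2 := hq.mul_mul hassoc
      rwa [show L2 * (L1 ^ a * L2 ^ b) = L1 ^ a * L2 ^ (b + 1) by ring] at h2

lemma rootMult_ge {H : MP} {d : ℕ} (hH : H.IsHomogeneous d) (hH0 : H ≠ 0) (z : P1)
    (k : ℕ) (hdvd : linForm z ^ k ∣ H) : k ≤ rootMult H z := by
  have hbdd : BddAbove {j : ℕ | linForm z ^ j ∣ H} := by
    refine ⟨d, fun j hj => ?_⟩
    obtain ⟨s, hs⟩ := hj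
    have hL : (linForm z ^ j : MP) ≠ 0 := pow_ne_zero _ (linForm_ne_zero z)
    have hs0 : s ≠ 0 := fun h => hH0 (by rw [hs, h, mul_zero])
    obtain ⟨k', l', hkl, hk', _⟩ := isHomogeneous_of_factor hL hs0 (hs ▸ hH)
    have hLj : (linForm z ^ j : MP).IsHomogeneous j := by
      have := (linForm_isHomogeneous z).pow j
      rwa [one_mul] at this
    have : j = k' := hLj.inj_right hk' hL
    omega
  exact le_csSup hbdd hdvd

end Aux

/-- for `d ≥ 4`, a stable map in `I(d)` has at least `3` distinct holes. -/
theorem statement9 (d : ℕ) (hd : 4 ≤ d) (f : MP × MP) (hf : IsRatRep d f)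
    (hs : Stable d f) (hI : Idet f) :
    ∃ z₁ z₂ z₃ : P1, z₁ ≠ z₂ ∧ z₁ ≠ z₃ ∧ z₂ ≠ z₃ ∧
      IsHole f z₁ ∧ IsHole f z₂ ∧ IsHole f z₃ := by
  by_contra hcon
  have key : ∀ z₁ z₂ z₃ : P1, z₁ ≠ z₂ → z₁ ≠ z₃ → z₂ ≠ z₃ →
      IsHole f z₁ → IsHole f z₂ → ¬ IsHole f z₃ :=
    fun z₁ z₂ z₃ h12 h13 h23 h1 h2 h3 => hcon ⟨z₁, z₂, z₃, h12, h13, h23, h1, h2, h3⟩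
  obtain ⟨c, hc, hole_c⟩ := hI
  obtain ⟨hf1, hf2, hfne⟩ := hf
  obtain ⟨H, hHdef⟩ : ∃ H : MP, H = Hgcd f := ⟨_, rfl⟩
  have hH0 : H ≠ 0 := by
    rw [hHdef, Hgcd]
    intro h
    obtain ⟨h1, h2⟩ := (gcd_eq_zero_iff f.1 f.2).mp h
    exact hfne (Prod.ext h1 h2)
  obtain ⟨Ph, hPhdef⟩ : ∃ p : MP, p = (fhat f).1 := ⟨_, rfl⟩
  obtain ⟨Qh, hQhdef⟩ : ∃ p : MP, p = (fhat f).2 := ⟨_, rfl⟩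
  have hP : f.1 = H * Ph := by
    rw [hHdef, hPhdef, Hgcd]
    exact (dvd_def.mp (gcd_dvd_left f.1 f.2)).choose_spec
  have hQ : f.2 = H * Qh := by
    rw [hHdef, hQhdef, Hgcd]
    exact (dvd_def.mp (gcd_dvd_right f.1 f.2)).choose_spec
  -- homogeneity of H, Ph, Qh
  obtain ⟨m, e, hHm, hPe, hQe, hme⟩ : ∃ m e : ℕ, H.IsHomogeneous m ∧ Ph.IsHomogeneous e ∧
      Qh.IsHomogeneous e ∧ m + e = d := by
    by_cases h1 : f.1 = 0
    · have h2 : f.2 ≠ 0 := fun h => hfne (Prod.ext h1 h)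
      have hPh0 : Ph = 0 := by
        rcases mul_eq_zero.mp (hP ▸ h1 : H * Ph = 0) with h | h
        · exact absurd h hH0
        · exact h
      have hQh0 : Qh ≠ 0 := fun h => h2 (by rw [hQ, h, mul_zero])
      have hf2' : (H * Qh).IsHomogeneous d := by rw [← hQ]; exact hf2
      obtain ⟨m, e, hme, hHm, hQe⟩ := isHomogeneous_of_factor hH0 hQh0 hf2'
      exact ⟨m, e, hHm, hPh0 ▸ isHomogeneous_zero _ _ _, hQe, hme⟩
    · have hPh0 : Ph ≠ 0 := fun h => h1 (by rw [hP, h, mul_zero])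
      have hf1' : (H * Ph).IsHomogeneous d := by rw [← hP]; exact hf1
      obtain ⟨m, e, hme, hHm, hPe⟩ := isHomogeneous_of_factor hH0 hPh0 hf1'
      by_cases hQh0 : Qh = 0
      · exact ⟨m, e, hHm, hPe, hQh0 ▸ isHomogeneous_zero _ _ _, hme⟩
      · have hf2' : (H * Qh).IsHomogeneous d := by rw [← hQ]; exact hf2
        obtain ⟨m', e', hme', hHm', hQe'⟩ := isHomogeneous_of_factor hH0 hQh0 hf2'
        have hmm : m = m' := hHm.inj_right hHm' hH0
        have hee : e' = e := by omega
        exact ⟨m, e, hHm, hPe, hee ▸ hQe', hme⟩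
  -- gcd of the quotients is 1
  have hgcd1 : gcd Ph Qh = 1 := by
    have hnorm : normalize H = H := by
      rw [hHdef, Hgcd]; exact normalize_gcd _ _
    have hcalc : H = H * gcd Ph Qh := by
      conv_lhs => rw [hHdef, Hgcd, hP, hQ]
      exact (gcd_mul_left' H Ph Qh).eq_of_normalized (normalize_gcd _ _) (by rw [@normalize_mul MP _ UniqueFactorizationMonoid.strongNormalizationMonoid H (gcd Ph Qh), hnorm, normalize_gcd])
    have := mul_left_cancel₀ hH0 (by rw [mul_one, ← hcalc] : H * 1 = H * gcd Ph Qh)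
    exact this.symm
  -- e = 0, i.e. the induced map collapses to a constant only when deg H = d
  have he0 : e = 0 := by
    by_contra he0
    have he1 : 1 ≤ e := Nat.pos_of_ne_zero he0
    obtain ⟨R, hRdef⟩ : ∃ R : MP, R = C (c.rep 1) * Ph - C (c.rep 0) * Qh := ⟨_, rfl⟩
    have hRhom : R.IsHomogeneous e := by
      rw [hRdef]
      exact (hPe.C_mul (c.rep 1)).sub (hQe.C_mul (c.rep 0))
    have hReval : ∀ v : Fin 2 → ℂ, eval v R = 0 := by
      intro v
      by_cases hv : v = 0
      · subst hv
        rw [eval_zero]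
        have : constantCoeff R = coeff 0 R := rfl
        rw [this]
        apply hRhom.coeff_eq_zero
        simp only [map_zero]
        omega
      · -- use that fhatFun f (mk v) = c
        obtain ⟨z, hz⟩ : ∃ z : P1, z = Projectivization.mk ℂ v hv := ⟨_, rfl⟩
        have hrze : eval z.rep R = 0 := by
          have hcz : fhatFun f z = c := hc z
          rw [fhatFun, apply₁] at hcz
          rw [hRdef, map_sub, map_mul, map_mul, eval_C, eval_C]
          split_ifs at hcz with hcond
          · -- the evaluation vector is a nonzero multiple of c.rep
            obtain ⟨a, ha⟩ := (Projectivization.mk_eq_mk_iff ℂ _ _ hcond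
              (Projectivization.rep_nonzero c)).mp (hcz.trans (Projectivization.mk_rep c).symm)
            have h0 : eval z.rep (fhat f).1 = (a : ℂ) * c.rep 0 := by
              have := congrFun ha 0
              simpa [Units.smul_def] using this.symm
            have h1 : eval z.rep (fhat f).2 = (a : ℂ) * c.rep 1 := by
              have := congrFun ha 1
              simpa [Units.smul_def] using this.symm
            rw [hPhdef, hQhdef, h0, h1]
            ring
          · push_neg at hcond
            have h0 : eval z.rep (fhat f).1 = 0 := by
              simpa using congrFun hcond 0
            have h1 : eval z.rep (fhat f).2 = 0 := by
              simpa using congrFun hcond 1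
            rw [hPhdef, hQhdef, h0, h1]
            ring
        -- transfer the vanishing from z.rep to v
        obtain ⟨b, hb⟩ := (Projectivization.mk_eq_mk_iff ℂ _ _
          (Projectivization.rep_nonzero z) hv).mp (hz ▸ Projectivization.mk_rep z)
        have hbv : z.rep = fun i => (b : ℂ) * v i := by
          funext i
          rw [← hb]
          simp [Units.smul_def]
        rw [hbv, eval_smulQ hRhom] at hrze
        rcases mul_eq_zero.mp hrze with h' | h'
        · exact absurd h' (pow_ne_zero _ (Units.ne_zero b))
        · exact h'
    have hR0 : R = 0 := hRhom.eq_zero_of_forall_eval_eq_zero hReval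
    have hPQ : C (c.rep 1) * Ph = C (c.rep 0) * Qh := by
      have := hRdef ▸ hR0
      linear_combination this
    -- now derive that Ph or Qh is a unit, contradicting e ≥ 1
    have hrepc := Projectivization.rep_nonzero c
    have hunit_e : ∀ p : MP, IsUnit p → p.IsHomogeneous e → False := fun p hu hp =>
      he0 (homog_deg_zero_of_isUnit hu hp)
    by_cases hPh0 : Ph = 0
    · have hQh0 : Qh ≠ 0 := by
        intro h
        exact hfne (Prod.ext (by rw [hP, hPh0, mul_zero]; rfl) (by rw [hQ, h, mul_zero]; rfl))
      rw [hPh0, gcd_zero_left] at hgcd1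
      exact hunit_e Qh (normalize_eq_one.mp hgcd1) hQe
    · by_cases hQh0 : Qh = 0
      · rw [hQh0, gcd_zero_right] at hgcd1
        exact hunit_e Ph (normalize_eq_one.mp hgcd1) hPe
      · have hc0 : c.rep 0 ≠ 0 := by
          intro h0
          rw [h0, C_0, zero_mul] at hPQ
          rcases mul_eq_zero.mp hPQ with h | h
          · have hc1 : c.rep 1 ≠ 0 := by
              intro h1
              exact hrepc (by funext i; fin_cases i <;> simpa [h0, h1])
            exact hc1 (by simpa [MvPolynomial.C_eq_zero] using h)
          · exact hPh0 h
        have hdvd2 : Ph ∣ Qh := by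
          refine ⟨C ((c.rep 0)⁻¹ * c.rep 1), ?_⟩
          have : Qh = C (c.rep 0)⁻¹ * (C (c.rep 1) * Ph) := by
            rw [hPQ, ← mul_assoc, ← C_mul, inv_mul_cancel₀ hc0, C_1, one_mul]
          rw [this, C_mul]
          ring
        have hPu : IsUnit Ph := by
          apply isUnit_of_dvd_one
          rw [← hgcd1]
          exact dvd_gcd dvd_rfl hdvd2
        exact hunit_e Ph hPu hPe
  -- so H is homogeneous of degree d
  have hHd : H.IsHomogeneous d := by
    have : m = d := by omega
    exact this ▸ hHm
  -- the depth of c is < (d-1)/2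
  have hfixc : fhatFun f c = c := hc c
  have hdc : (depthP f c : ℚ) < ((d : ℚ) - 1) / 2 := by
    by_contra hle
    push_neg at hle
    exact hs.2 c hle hfixc
  -- the main counting estimate
  have main : ∀ w : P1, (∀ z : P1, IsHole f z → z = c ∨ z = w) →
      (d : ℕ) ≤ depthP f c + depthP f w := by
    intro w hcover
    obtain ⟨L1, hL1⟩ : ∃ L : MP, L = linForm c := ⟨_, rfl⟩
    obtain ⟨L2, hL2⟩ : ∃ L : MP, L = linForm w := ⟨_, rfl⟩
    have hclass : ∀ q ∈ UniqueFactorizationMonoid.factors H,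
        Associated q L1 ∨ Associated q L2 := by
      intro q hqmem
      have hqprime := UniqueFactorizationMonoid.prime_of_factor q hqmem
      have hqdvd : q ∣ H :=
        (Multiset.dvd_prod hqmem).trans (UniqueFactorizationMonoid.factors_prod hH0).dvd
      obtain ⟨z, hzdvd, hzassoc⟩ := prime_assoc_linForm hHd hH0 hqprime hqdvd
      have hzhole : IsHole f z := by rw [IsHole, ← hHdef]; exact hzdvd
      rcases hcover z hzhole with h | h
      · left; rw [hL1, ← h]; exact hzassoc
      · right; rw [hL2, ← h]; exact hzassoc
    obtain ⟨a, b, hab, hassoc⟩ :=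
      multiset_two_classes L1 L2 (UniqueFactorizationMonoid.factors H) hclass
    have hHassoc : Associated H (L1 ^ a * L2 ^ b) :=
      (UniqueFactorizationMonoid.factors_prod hH0).symm.trans hassoc
    obtain ⟨u, hu⟩ := hHassoc.symm
    -- H = L1^a * L2^b * u
    have hL10 : L1 ≠ 0 := hL1 ▸ linForm_ne_zero c
    have hL20 : L2 ≠ 0 := hL2 ▸ linForm_ne_zero w
    have hprod0 : (L1 ^ a * L2 ^ b : MP) ≠ 0 :=
      mul_ne_zero (pow_ne_zero _ hL10) (pow_ne_zero _ hL20)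
    have hu0 : ((u : MP)) ≠ 0 := Units.ne_zero u
    have hprodHom : (L1 ^ a * L2 ^ b : MP).IsHomogeneous (a + b) := by
      have h1 : (L1 ^ a : MP).IsHomogeneous a := by
        have := (hL1 ▸ linForm_isHomogeneous c : L1.IsHomogeneous 1).pow a
        rwa [one_mul] at this
      have h2 : (L2 ^ b : MP).IsHomogeneous b := by
        have := (hL2 ▸ linForm_isHomogeneous w : L2.IsHomogeneous 1).pow b
        rwa [one_mul] at this
      exact h1.mul h2
    have habd : a + b = d := by
      have hH' : (L1 ^ a * L2 ^ b * (u : MP)).IsHomogeneous d := by rw [hu]; exact hHd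
      obtain ⟨k, l, hkl, hk, hl⟩ := isHomogeneous_of_factor hprod0 hu0 hH'
      have hk' : a + b = k := hprodHom.inj_right hk hprod0
      have hl0 : l = 0 := homog_deg_zero_of_isUnit u.isUnit hl
      omega
    -- divisibility gives depth bounds
    have hdvd1 : linForm c ^ a ∣ H := by
      refine ⟨L2 ^ b * (u : MP), ?_⟩
      rw [← hu, ← hL1]
      ring
    have hdvd2 : linForm w ^ b ∣ H := by
      refine ⟨L1 ^ a * (u : MP), ?_⟩
      rw [← hu, ← hL2]
      ring
    have hda : a ≤ depthP f c := by
      have := rootMult_ge hHd hH0 c a hdvd1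
      rwa [depthP, ← hHdef]
    have hdb : b ≤ depthP f w := by
      have := rootMult_ge hHd hH0 w b hdvd2
      rwa [depthP, ← hHdef]
    omega
  -- split on whether there is a hole other than c
  by_cases hw : ∃ w : P1, w ≠ c ∧ IsHole f w
  · obtain ⟨w, hwc, hole_w⟩ := hw
    have hcover : ∀ z : P1, IsHole f z → z = c ∨ z = w := by
      intro z hz
      by_contra hboth
      push_neg at hboth
      exact key c w z hwc.symm (fun h => hboth.1 h.symm) (fun h => hboth.2 h.symm)
        hole_c hole_w hz
    have hcount := main w hcover
    have hw2 : (depthP f w : ℚ) ≤ (d : ℚ) / 2 := hs.1 w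
    have hcount' : (d : ℚ) ≤ (depthP f c : ℚ) + (depthP f w : ℚ) := by
      exact_mod_cast hcount
    linarith
  · push_neg at hw
    have hcover : ∀ z : P1, IsHole f z → z = c ∨ z = c := by
      intro z hz
      rcases eq_or_ne z c with h | h
      · exact Or.inl h
      · exact absurd hz (hw z h)
    have hcount := main c hcover
    have hcount' : (d : ℚ) ≤ (depthP f c : ℚ) + (depthP f c : ℚ) := by
      exact_mod_cast hcount
    have hd4 : (4 : ℚ) ≤ (d : ℚ) := by exact_mod_cast hd
    linarith
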